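/- Let Γ = {1,g,h,gh} ≅ C₂×C₂ act on ℙ¹ as above, and let G₃({1},Γ) be the subgroup of Γ ≀ S₃ generated by S₃ and by {(x₁,x₂,x₃) ∈ Γ³ : x₁x₂x₃ = 1}. Then the stabilizer in G₃({1},Γ) of the point p = ([1:0],[1:i],[1:1]) ∈ (ℙ¹)³ is exactly {(1,1,1), (g,h,gh)}, a group of order 2. -/

import Mathlib

set_option synthInstance.maxHeartbeats 400000

open Matrix Projectivization

/-- The special linear group `SL₂(ℂ)`. -/
abbrev SL2 : Type := Matrix.SpecialLinearGroup (Fin 2) ℂ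

/-- The complex projective line `ℙ¹`. -/
abbrev ProjLine : Type := Projectivization ℂ (Fin 2 → ℂ)

lemma projmk_congr {v w : Fin 2 → ℂ} (hv : v ≠ 0) (hw : w ≠ 0) (h : v = w) :
    Projectivization.mk ℂ v hv = Projectivization.mk ℂ w hw := by subst h; rfl

/-- The Möbius action of `SL₂(ℂ)` on `ℙ¹`. -/
noncomputable instance : MulAction SL2 ProjLine where
  smul A p := Projectivization.map (Matrix.SpecialLinearGroup.toLin' A).toLinearMap
      (Matrix.SpecialLinearGroup.toLin' A).injective p
  one_smul p := by
    induction p using Projectivization.ind with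
    | h v hv =>
      show Projectivization.map _ _ _ = _
      rw [Projectivization.map_mk]
      exact projmk_congr _ _ (by rw [_root_.map_one]; rfl)
  mul_smul A B p := by
    induction p using Projectivization.ind with
    | h v hv =>
      show Projectivization.map _ _ _ =
        Projectivization.map _ _ (Projectivization.map _ _ _)
      rw [Projectivization.map_mk, Projectivization.map_mk, Projectivization.map_mk]
      exact projmk_congr _ _ (by rw [_root_.map_mul]; rfl)

lemma center_smul_eq (z : SL2) (hz : z ∈ Subgroup.center SL2) (p : ProjLine) : z • p = p := by
  obtain ⟨r, hr, hrz⟩ := Matrix.SpecialLinearGroup.mem_center_iff.mp hz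
  have hr0 : r ≠ 0 := by
    intro h; rw [h] at hr; simp at hr
  induction p using Projectivization.ind with
  | h v hv =>
    show Projectivization.map _ _ _ = _
    rw [Projectivization.map_mk, Projectivization.mk_eq_mk_iff']
    refine ⟨r, ?_⟩
    have h1 : (Matrix.SpecialLinearGroup.toLin' z).toLinearMap v
        = (z : Matrix (Fin 2) (Fin 2) ℂ) *ᵥ v := rfl
    rw [h1, ← hrz]
    show _ = (Matrix.scalar (Fin 2)) r *ᵥ v
    funext i
    simp [Matrix.scalar_apply, Matrix.mulVec_diagonal]

/-- The projective special linear group `PSL₂(ℂ)`. -/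
abbrev PSL2 : Type := SL2 ⧸ Subgroup.center SL2

/-- The Möbius action of `PSL₂(ℂ)` on `ℙ¹`. -/
noncomputable instance : MulAction PSL2 ProjLine where
  smul q p := Quotient.liftOn' q (fun A => A • p) (fun a b hab => by
    rw [QuotientGroup.leftRel_apply] at hab
    show a • p = b • p
    conv_rhs => rw [show b = a * (a⁻¹ * b) by group]
    rw [mul_smul, center_smul_eq _ hab])
  one_smul p := one_smul (M := SL2) p
  mul_smul q r p := by
    induction q using Quotient.inductionOn' with
    | h a =>
      induction r using Quotient.inductionOn' with
      | h b => exact mul_smul (α := SL2) a b p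

lemma vec_ne_zero_left (a b : ℂ) (ha : a ≠ 0) : ![a, b] ≠ 0 :=
  fun hc => ha (by simpa using congrFun hc 0)

/-- The image in `PSL₂(ℂ)` of the matrix `[[i,0],[0,−i]]`. -/
noncomputable def gP : PSL2 :=
  QuotientGroup.mk (⟨!![Complex.I, 0; 0, -Complex.I], by
    simp [Matrix.det_fin_two_of, Complex.I_mul_I]⟩ : SL2)

/-- The image in `PSL₂(ℂ)` of the matrix `[[0,1],[−1,0]]`. -/
noncomputable def hP : PSL2 :=
  QuotientGroup.mk (⟨!![0, 1; -1, 0], by norm_num [Matrix.det_fin_two_of]⟩ : SL2)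

/-- The point `[a : b] ∈ ℙ¹` (where `a ≠ 0`). -/
noncomputable def pt (a b : ℂ) (ha : a ≠ 0) : ProjLine :=
  Projectivization.mk ℂ ![a, b] (vec_ne_zero_left a b ha)

/-- The point `[0 : 1] ∈ ℙ¹`. -/
noncomputable def pt01 : ProjLine :=
  Projectivization.mk ℂ ![0, 1] (fun hc => (one_ne_zero : (1 : ℂ) ≠ 0) (by simpa using congrFun hc 1))

section Aux
open Projectivization

lemma psl_smul_mk (A : SL2) (v : Fin 2 → ℂ) (hv : v ≠ 0) (hw : (A : Matrix (Fin 2) (Fin 2) ℂ) *ᵥ v ≠ 0) :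
    (QuotientGroup.mk A : PSL2) • Projectivization.mk ℂ v hv
      = Projectivization.mk ℂ ((A : Matrix (Fin 2) (Fin 2) ℂ) *ᵥ v) hw := by
  show Projectivization.map (Matrix.SpecialLinearGroup.toLin' A).toLinearMap
    (Matrix.SpecialLinearGroup.toLin' A).injective (Projectivization.mk ℂ v hv) = _
  rw [Projectivization.map_mk]
  exact projmk_congr _ _ rfl

lemma psl_smul_pt (A : SL2) (v w : Fin 2 → ℂ) (hv : v ≠ 0) (hw : w ≠ 0) (a : ℂ) (ha : a ≠ 0)
    (h : (A : Matrix (Fin 2) (Fin 2) ℂ) *ᵥ v = a • w) :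
    (QuotientGroup.mk A : PSL2) • Projectivization.mk ℂ v hv = Projectivization.mk ℂ w hw := by
  have hw' : (A : Matrix (Fin 2) (Fin 2) ℂ) *ᵥ v ≠ 0 := by rw [h]; exact smul_ne_zero ha hw
  rw [psl_smul_mk A v hv hw', Projectivization.mk_eq_mk_iff']
  exact ⟨a, h.symm⟩

@[simp] lemma pt_eq_iff (b c : ℂ) : pt 1 b one_ne_zero = pt 1 c one_ne_zero ↔ b = c := by
  unfold pt
  rw [Projectivization.mk_eq_mk_iff']
  constructor
  · rintro ⟨a, ha⟩
    have h0 := congrFun ha 0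
    have h1 := congrFun ha 1
    simp at h0 h1
    rw [h0, one_mul] at h1
    exact h1.symm
  · rintro rfl; exact ⟨1, one_smul _ _⟩

@[simp] lemma pt_ne_pt01 (b : ℂ) : ¬ pt 1 b one_ne_zero = pt01 := by
  unfold pt pt01
  rw [Projectivization.mk_eq_mk_iff']
  rintro ⟨a, ha⟩
  have h0 := congrFun ha 0
  simp at h0

@[simp] lemma pt01_ne_pt (b : ℂ) : ¬ pt01 = pt 1 b one_ne_zero :=
  fun h => pt_ne_pt01 b h.symm

lemma gP_smul (b : ℂ) : gP • pt 1 b one_ne_zero = pt 1 (-b) one_ne_zero := by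
  unfold gP pt
  apply psl_smul_pt _ _ _ _ _ Complex.I Complex.I_ne_zero
  funext i
  fin_cases i <;>
    simp [Matrix.mulVec, dotProduct, Fin.sum_univ_two, mul_comm]

lemma gP_smul01 : gP • pt01 = pt01 := by
  unfold gP pt01
  apply psl_smul_pt _ _ _ _ _ (-Complex.I) (by simp [Complex.I_ne_zero])
  funext i
  fin_cases i <;>
    simp [Matrix.mulVec, dotProduct, Fin.sum_univ_two]

lemma hP_smul_0 : hP • pt 1 0 one_ne_zero = pt01 := by
  unfold hP pt pt01
  apply psl_smul_pt _ _ _ _ _ (-1) (by norm_num)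
  funext i
  fin_cases i <;>
    simp [Matrix.mulVec, dotProduct, Fin.sum_univ_two]

lemma hP_smul_I : hP • pt 1 Complex.I one_ne_zero = pt 1 Complex.I one_ne_zero := by
  unfold hP pt
  apply psl_smul_pt _ _ _ _ _ Complex.I Complex.I_ne_zero
  funext i
  fin_cases i <;>
    simp [Matrix.mulVec, dotProduct, Fin.sum_univ_two, Complex.I_mul_I]

lemma hP_smul_1 : hP • pt 1 1 one_ne_zero = pt 1 (-1) one_ne_zero := by
  unfold hP pt
  apply psl_smul_pt _ _ _ _ _ 1 one_ne_zero
  funext i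
  fin_cases i <;>
    simp [Matrix.mulVec, dotProduct, Fin.sum_univ_two]

lemma ghP_smul_0 : (gP * hP) • pt 1 0 one_ne_zero = pt01 := by
  rw [mul_smul, hP_smul_0, gP_smul01]

lemma ghP_smul_I : (gP * hP) • pt 1 Complex.I one_ne_zero = pt 1 (-Complex.I) one_ne_zero := by
  rw [mul_smul, hP_smul_I, gP_smul]

lemma ghP_smul_1 : (gP * hP) • pt 1 1 one_ne_zero = pt 1 1 one_ne_zero := by
  rw [mul_smul, hP_smul_1, gP_smul, neg_neg]

@[simp] lemma vec3_two {α : Type*} (a b c : α) : ![a, b, c] 2 = c := rfl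

end Aux
/-- Let `Γ = {1,g,h,gh} ≅ C₂×C₂ < PSL₂(ℂ)` and let `G₃({1},Γ) < Γ ≀ S₃` be
the subgroup of elements `(f,σ)` with `f₁f₂f₃ = 1`, acting on `(ℙ¹)³` coordinatewise and by
permutation.  The stabilizer of `p = ([1:0],[1:i],[1:1])` in `G₃({1},Γ)` is exactly
`{(1,1,1), (g,h,gh)}`, of order 2. -/
theorem stabilizer_in_G3 (p : Fin 3 → ProjLine)
    (hp : p = ![pt 1 0 one_ne_zero, pt 1 Complex.I one_ne_zero, pt 1 1 one_ne_zero]) :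
    ∀ f : Fin 3 → PSL2, (∀ i, f i ∈ ({1, gP, hP, gP * hP} : Set PSL2)) →
      f 0 * f 1 * f 2 = 1 →
      ∀ σ : Equiv.Perm (Fin 3),
        ((∀ i, f i • p (σ⁻¹ i) = p i) ↔
          (σ = 1 ∧ (f = ![1, 1, 1] ∨ f = ![gP, hP, gP * hP]))) := by
  subst hp
  intro f hf hprod σ
  simp only [Set.mem_insert_iff, Set.mem_singleton_iff] at hf
  have hfin : ∀ k : Fin 3, k = 0 ∨ k = 1 ∨ k = 2 := by decide
  constructor
  · intro h
    have key0 : σ⁻¹ 0 = 0 ∧ (f 0 = 1 ∨ f 0 = gP) := by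
      have h0 := h 0
      rcases hf 0 with hc | hc | hc | hc <;> rcases hfin (σ⁻¹ 0) with hj | hj | hj <;>
        simp only [hj, hc, Matrix.cons_val_zero, Matrix.cons_val_one, Matrix.head_cons,
          vec3_two, one_smul, gP_smul, gP_smul01, hP_smul_0, hP_smul_I, hP_smul_1,
          ghP_smul_0, ghP_smul_I, ghP_smul_1, pt_eq_iff, pt_ne_pt01, pt01_ne_pt,
          neg_zero, neg_eq_zero] at h0 <;>
        first
          | exact ⟨hj, Or.inl hc⟩
          | exact ⟨hj, Or.inr hc⟩
          | norm_num [Complex.ext_iff] at h0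
    have key1 : σ⁻¹ 1 = 1 ∧ (f 1 = 1 ∨ f 1 = hP) := by
      have h0 := h 1
      rcases hf 1 with hc | hc | hc | hc <;> rcases hfin (σ⁻¹ 1) with hj | hj | hj <;>
        simp only [hj, hc, Matrix.cons_val_zero, Matrix.cons_val_one, Matrix.head_cons,
          vec3_two, one_smul, gP_smul, gP_smul01, hP_smul_0, hP_smul_I, hP_smul_1,
          ghP_smul_0, ghP_smul_I, ghP_smul_1, pt_eq_iff, pt_ne_pt01, pt01_ne_pt,
          neg_zero, neg_eq_zero] at h0 <;>
        first
          | exact ⟨hj, Or.inl hc⟩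
          | exact ⟨hj, Or.inr hc⟩
          | norm_num [Complex.ext_iff] at h0
    have key2 : σ⁻¹ 2 = 2 ∧ (f 2 = 1 ∨ f 2 = gP * hP) := by
      have h0 := h 2
      rcases hf 2 with hc | hc | hc | hc <;> rcases hfin (σ⁻¹ 2) with hj | hj | hj <;>
        simp only [hj, hc, Matrix.cons_val_zero, Matrix.cons_val_one, Matrix.head_cons,
          vec3_two, one_smul, gP_smul, gP_smul01, hP_smul_0, hP_smul_I, hP_smul_1,
          ghP_smul_0, ghP_smul_I, ghP_smul_1, pt_eq_iff, pt_ne_pt01, pt01_ne_pt,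
          neg_zero, neg_eq_zero] at h0 <;>
        first
          | exact ⟨hj, Or.inl hc⟩
          | exact ⟨hj, Or.inr hc⟩
          | norm_num [Complex.ext_iff] at h0
    have hσ : σ = 1 := by
      have hinv : σ⁻¹ = 1 := by
        apply Equiv.ext
        intro i
        rcases hfin i with rfl | rfl | rfl
        · exact key0.1
        · exact key1.1
        · exact key2.1
      exact inv_eq_one.mp hinv
    refine ⟨hσ, ?_⟩
    have prod_ne : ∀ (x : PSL2) (q : ProjLine), x • q ≠ q → x ≠ 1 := by
      intro x q hne he
      exact hne (by rw [he, one_smul])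
    rcases key0.2 with hc0 | hc0 <;> rcases key1.2 with hc1 | hc1 <;>
        rcases key2.2 with hc2 | hc2 <;> rw [hc0, hc1, hc2] at hprod
    · left; funext i; rcases hfin i with rfl | rfl | rfl
      · exact hc0
      · exact hc1
      · exact hc2
    · -- (1,1,gh)
      exfalso
      refine prod_ne (gP * hP) (pt 1 0 one_ne_zero) ?_ (by simpa using hprod)
      rw [ghP_smul_0]; simp
    · -- (1,h,1)
      exfalso
      refine prod_ne hP (pt 1 0 one_ne_zero) ?_ (by simpa using hprod)
      rw [hP_smul_0]; simp
    · -- (1,h,gh)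
      exfalso
      refine prod_ne (hP * (gP * hP)) (pt 1 1 one_ne_zero) ?_ (by simpa using hprod)
      rw [mul_smul, ghP_smul_1, hP_smul_1]
      norm_num [Complex.ext_iff]
    · -- (g,1,1)
      exfalso
      refine prod_ne gP (pt 1 1 one_ne_zero) ?_ (by simpa using hprod)
      rw [gP_smul]
      norm_num [Complex.ext_iff]
    · -- (g,1,gh)
      exfalso
      refine prod_ne (gP * (gP * hP)) (pt 1 1 one_ne_zero) ?_ (by simpa using hprod)
      rw [mul_smul, ghP_smul_1, gP_smul]
      norm_num [Complex.ext_iff]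
    · -- (g,h,1)
      exfalso
      refine prod_ne (gP * hP) (pt 1 Complex.I one_ne_zero) ?_ (by simpa using hprod)
      rw [ghP_smul_I]
      norm_num [Complex.ext_iff]
    · -- (g,h,gh) : good
      right; funext i; rcases hfin i with rfl | rfl | rfl
      · exact hc0
      · exact hc1
      · exact hc2
  · rintro ⟨rfl, hf' | hf'⟩ <;> subst hf' <;> intro i <;> rcases hfin i with rfl | rfl | rfl <;>
      simp [gP_smul, gP_smul01, hP_smul_0, hP_smul_I, hP_smul_1,
        ghP_smul_0, ghP_smul_I, ghP_smul_1]
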